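/- A permutation w of {1,...,n} is a standard Coxeter element of the symmetric group S_n (i.e., a product of the adjacent transpositions s_1,...,s_{n-1} each used exactly once, in some order) if and only if w consists of a single n-cycle whose cycle notation (a_1, a_2, ..., a_n) starting at a_1 = 1 has an initial strictly increasing subsequence 1 = a_1 < a_2 < ... < a_m = n followed by a strictly decreasing sequence n = a_m > a_{m+1} > ... > a_n > 1. -/

import Mathlib

/-- The adjacent transposition `sᵢ = (i, i+1)` in the symmetric group on `Fin (n+1)`. -/
def adjSwap (n : ℕ) (i : Fin n) : Equiv.Perm (Fin (n+1)) :=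
  Equiv.swap i.castSucc i.succ

/-- `c` is a standard Coxeter element of `S_{n+1}`: a product of the adjacent
transpositions `s₁, …, sₙ`, each used exactly once, in some order. -/
def IsStdCoxeter (n : ℕ) (c : Equiv.Perm (Fin (n+1))) : Prop :=
  ∃ l : List (Fin n), l.Nodup ∧ (∀ i, i ∈ l) ∧ c = (l.map (adjSwap n)).prod

namespace StdCox

open Equiv Fin

def Uni (n : ℕ) (w : Equiv.Perm (Fin (n+1))) : Prop :=
  ∃ a : Fin (n+1) ≃ Fin (n+1), a 0 = 0 ∧ (∀ i, w (a i) = a (i + 1)) ∧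
    ∃ m : Fin (n+1), a m = Fin.last n ∧
      (∀ i j : Fin (n+1), i < j → j ≤ m → a i < a j) ∧
      (∀ i j : Fin (n+1), m ≤ i → i < j → a j < a i)

/-- extension of a permutation of `Fin (n+1)` to `Fin (n+2)` fixing the last point -/
def E (n : ℕ) (c : Equiv.Perm (Fin (n+1))) : Equiv.Perm (Fin (n+2)) where
  toFun x := if h : x = Fin.last (n+1) then x else (c (x.castPred h)).castSucc
  invFun x := if h : x = Fin.last (n+1) then x else (c⁻¹ (x.castPred h)).castSucc
  left_inv x := by
    by_cases h : x = Fin.last (n+1)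
    · simp [h]
    · simp only [dif_neg h, dif_neg (Fin.castSucc_lt_last _).ne]
      rw [Fin.castPred_castSucc]
      simp [h]
  right_inv x := by
    by_cases h : x = Fin.last (n+1)
    · simp [h]
    · simp only [dif_neg h, dif_neg (Fin.castSucc_lt_last _).ne]
      rw [Fin.castPred_castSucc]
      simp [h]

@[simp] lemma E_castSucc (n : ℕ) (c : Equiv.Perm (Fin (n+1))) (x : Fin (n+1)) :
    E n c x.castSucc = (c x).castSucc := by
  show dite _ _ _ = _
  rw [dif_neg (Fin.castSucc_lt_last _).ne, Fin.castPred_castSucc]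

@[simp] lemma E_last (n : ℕ) (c : Equiv.Perm (Fin (n+1))) :
    E n c (Fin.last (n+1)) = Fin.last (n+1) := by
  show dite _ _ _ = _
  rw [dif_pos rfl]

lemma E_mul (n : ℕ) (c d : Equiv.Perm (Fin (n+1))) : E n (c * d) = E n c * E n d := by
  ext x
  induction x using Fin.lastCases with
  | last => simp [Equiv.Perm.mul_apply]
  | cast i => simp [Equiv.Perm.mul_apply]

@[simp] lemma E_one (n : ℕ) : E n 1 = 1 := by
  ext x
  induction x using Fin.lastCases with
  | last => simp
  | cast i => simp

lemma E_swap (n : ℕ) (a b : Fin (n+1)) :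
    E n (Equiv.swap a b) = Equiv.swap a.castSucc b.castSucc := by
  ext x
  induction x using Fin.lastCases with
  | last =>
      rw [E_last, Equiv.swap_apply_of_ne_of_ne (Fin.castSucc_lt_last a).ne'
        (Fin.castSucc_lt_last b).ne']
  | cast i =>
      rw [E_castSucc]
      rcases eq_or_ne i a with rfl | ha
      · simp
      · rcases eq_or_ne i b with rfl | hb
        · simp
        · rw [Equiv.swap_apply_of_ne_of_ne ha hb,
            Equiv.swap_apply_of_ne_of_ne (by simpa using ha) (by simpa using hb)]

lemma adjSwap_castSucc (n : ℕ) (i : Fin n) :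
    adjSwap (n+1) i.castSucc = E n (adjSwap n i) := by
  rw [adjSwap, adjSwap, E_swap, Fin.succ_castSucc]

def S (n : ℕ) : Equiv.Perm (Fin (n+2)) := adjSwap (n+1) (Fin.last n)

lemma S_K (n : ℕ) : S n (Fin.last n).castSucc = Fin.last (n+1) := by
  rw [S, adjSwap, Equiv.swap_apply_left, Fin.succ_last]

lemma S_N (n : ℕ) : S n (Fin.last (n+1)) = (Fin.last n).castSucc := by
  rw [S, adjSwap, ← Fin.succ_last, Equiv.swap_apply_right]

lemma S_fix (n : ℕ) {x : Fin (n+2)} (h1 : x ≠ (Fin.last n).castSucc)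
    (h2 : x ≠ Fin.last (n+1)) : S n x = x := by
  rw [S, adjSwap, Equiv.swap_apply_of_ne_of_ne h1 (by rwa [Fin.succ_last])]

lemma S_mul_S (n : ℕ) : S n * S n = 1 := by
  rw [S, adjSwap, Equiv.swap_mul_self]


/-! ### arithmetic helpers -/

lemma add_one_of_lt {n : ℕ} {i : Fin (n+1)} (h : (i : ℕ) < n) :
    i + 1 = ⟨(i : ℕ) + 1, by omega⟩ := by
  apply Fin.ext
  rw [Fin.val_add_one, if_neg]
  intro h'
  rw [h'] at h
  simp at h

lemma add_one_last {n : ℕ} {i : Fin (n+1)} (h : (i : ℕ) = n) : i + 1 = 0 := by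
  have : i = Fin.last n := Fin.ext h
  subst this
  apply Fin.ext
  rw [Fin.val_add_one, if_pos rfl]
  rfl

/-! ### application lemmas for `E n c * S n` and `S n * E n c` -/

section apps
variable {n : ℕ} (c : Equiv.Perm (Fin (n+1)))

lemma ES_castSucc {x : Fin (n+1)} (hx : x ≠ Fin.last n) :
    (E n c * S n) x.castSucc = (c x).castSucc := by
  rw [Equiv.Perm.mul_apply, S_fix n (by simpa [Fin.castSucc_inj] using hx)
    (Fin.castSucc_lt_last x).ne, E_castSucc]

lemma ES_K : (E n c * S n) (Fin.last n).castSucc = Fin.last (n+1) := by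
  rw [Equiv.Perm.mul_apply, S_K, E_last]

lemma ES_N : (E n c * S n) (Fin.last (n+1)) = (c (Fin.last n)).castSucc := by
  rw [Equiv.Perm.mul_apply, S_N, E_castSucc]

lemma SE_castSucc₁ {x : Fin (n+1)} (hx : c x ≠ Fin.last n) :
    (S n * E n c) x.castSucc = (c x).castSucc := by
  rw [Equiv.Perm.mul_apply, E_castSucc, S_fix n (by simpa [Fin.castSucc_inj] using hx)
    (Fin.castSucc_lt_last _).ne]

lemma SE_castSucc₂ {x : Fin (n+1)} (hx : c x = Fin.last n) :
    (S n * E n c) x.castSucc = Fin.last (n+1) := by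
  rw [Equiv.Perm.mul_apply, E_castSucc, hx, S_K]

lemma SE_N : (S n * E n c) (Fin.last (n+1)) = (Fin.last n).castSucc := by
  rw [Equiv.Perm.mul_apply, E_last, S_N]

end apps

/-! ### commutation -/

lemma commute_adjSwap {n : ℕ} {i j : Fin n} (h : (i : ℕ) + 1 < (j : ℕ)) :
    Commute (adjSwap n i) (adjSwap n j) := by
  apply Equiv.Perm.Disjoint.commute
  intro x
  by_cases hx : x = i.castSucc ∨ x = i.succ
  · right
    have hxv : (x : ℕ) ≤ (i : ℕ) + 1 := by
      rcases hx with rfl | rfl <;> simp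
    apply Equiv.swap_apply_of_ne_of_ne
    · intro h'; rw [h'] at hxv; simp at hxv; omega
    · intro h'; rw [h'] at hxv; simp at hxv; omega
  · left
    push_neg at hx
    exact Equiv.swap_apply_of_ne_of_ne hx.1 hx.2

/-! ### lists of non-last elements come from `castSucc` -/

lemma list_castSucc {n : ℕ} : ∀ (l : List (Fin (n+1))), (∀ x ∈ l, x ≠ Fin.last n) →
    ∃ m : List (Fin n), l = m.map Fin.castSucc
  | [], _ => ⟨[], rfl⟩
  | (x :: l), h => by
    obtain ⟨m, hm⟩ := list_castSucc l (fun y hy => h y (List.mem_cons_of_mem _ hy))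
    exact ⟨x.castPred (h x List.mem_cons_self) :: m,
      by simp [hm, Fin.castSucc_castPred]⟩


/-! ### packaging products -/

def Ehom (n : ℕ) : Equiv.Perm (Fin (n+1)) →* Equiv.Perm (Fin (n+2)) where
  toFun := E n
  map_one' := E_one n
  map_mul' := E_mul n

lemma prod_reassemble {n : ℕ} (l1 l2 : List (Fin (n+1))) :
    ((l1 ++ Fin.last n :: l2).map (adjSwap (n+1))).prod
      = (l1.map (adjSwap (n+1))).prod * S n * (l2.map (adjSwap (n+1))).prod := by
  rw [List.map_append, List.prod_append, List.map_cons, List.prod_cons, ← mul_assoc, S]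

lemma prod_map_castSucc {n : ℕ} (m : List (Fin n)) :
    ((m.map Fin.castSucc).map (adjSwap (n+1))).prod = E n ((m.map (adjSwap n)).prod) := by
  have h : ((m.map (adjSwap n)).map (Ehom n)).prod = Ehom n ((m.map (adjSwap n)).prod) :=
    (MonoidHom.map_list_prod _ _).symm
  rw [List.map_map]
  show _ = (Ehom n) (List.map (adjSwap n) m).prod
  rw [← h, List.map_map]
  congr 1
  apply List.map_congr_left
  intro i _
  exact adjSwap_castSucc n i

lemma sublist_package {n : ℕ} (L : List (Fin (n+1))) (hnd : L.Nodup)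
    (hmem : ∀ i : Fin (n+1), i ≠ Fin.last n → i ∈ L) (hnl : ∀ x ∈ L, x ≠ Fin.last n) :
    ∃ m : List (Fin n), m.Nodup ∧ (∀ i, i ∈ m) ∧
      (L.map (adjSwap (n+1))).prod = E n ((m.map (adjSwap n)).prod) := by
  obtain ⟨m, rfl⟩ := list_castSucc L hnl
  refine ⟨m, hnd.of_map _, ?_, prod_map_castSucc m⟩
  intro i
  have h := hmem i.castSucc (Fin.castSucc_lt_last _).ne
  rw [List.mem_map] at h
  obtain ⟨a, ha, haa⟩ := h
  rw [Fin.castSucc_inj] at haa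
  exact haa ▸ ha


lemma NF {n : ℕ} (w : Equiv.Perm (Fin (n+2))) :
    IsStdCoxeter (n+1) w ↔
      ∃ c, IsStdCoxeter n c ∧ (w = S n * E n c ∨ w = E n c * S n) := by
  constructor
  · rintro ⟨l, hnd, hmem, rfl⟩
    obtain ⟨l1, l2, rfl⟩ := List.append_of_mem (hmem (Fin.last n))
    have hnd' := hnd
    rw [List.nodup_append] at hnd'
    obtain ⟨hnd1, hnd2', hdisj⟩ := hnd'
    rw [List.nodup_cons] at hnd2'
    obtain ⟨hlast2, hnd2⟩ := hnd2'
    have hl1last : ∀ x ∈ l1, x ≠ Fin.last n := by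
      intro x hx h; exact hdisj x hx (Fin.last n) List.mem_cons_self h
    have hl2last : ∀ x ∈ l2, x ≠ Fin.last n := by
      intro x hx h; exact hlast2 (h ▸ hx)
    rw [prod_reassemble]
    by_cases hc : ∀ j ∈ l1, (j : ℕ) + 1 < n
    · -- S n commutes with everything in l1, move it to the front
      have hcomm : Commute (S n) (l1.map (adjSwap (n+1))).prod := by
        apply Commute.list_prod_right
        intro x hx
        rw [List.mem_map] at hx
        obtain ⟨j, hj, rfl⟩ := hx
        exact (commute_adjSwap (by simpa using hc j hj)).symm
      have key : (l1.map (adjSwap (n+1))).prod * S n * (l2.map (adjSwap (n+1))).prod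
          = S n * ((l1 ++ l2).map (adjSwap (n+1))).prod := by
        rw [← hcomm.eq, List.map_append, List.prod_append, mul_assoc]
      rw [key]
      have hLnd : (l1 ++ l2).Nodup := by
        rw [List.nodup_append]
        exact ⟨hnd1, hnd2, fun a ha b hb => hdisj a ha b (List.mem_cons_of_mem _ hb)⟩
      have hLmem : ∀ i : Fin (n+1), i ≠ Fin.last n → i ∈ l1 ++ l2 := by
        intro i hi
        have := hmem i
        rw [List.mem_append, List.mem_cons] at this
        rw [List.mem_append]
        rcases this with h | h | h
        · exact Or.inl h
        · exact absurd h hi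
        · exact Or.inr h
      have hLlast : ∀ x ∈ l1 ++ l2, x ≠ Fin.last n := by
        intro x hx
        rw [List.mem_append] at hx
        rcases hx with h | h
        · exact hl1last x h
        · exact hl2last x h
      obtain ⟨m, hmnd, hmmem, hprod⟩ := sublist_package _ hLnd hLmem hLlast
      exact ⟨_, ⟨m, hmnd, hmmem, rfl⟩, Or.inl (by rw [hprod])⟩
    · -- some j0 ∈ l1 with val = n - 1; S n commutes with everything in l2
      push_neg at hc
      obtain ⟨j0, hj0mem, hj0⟩ := hc
      have hj0v : (j0 : ℕ) = n - 1 ∧ 1 ≤ n := by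
        have h1 : (j0 : ℕ) ≤ n := Nat.lt_succ_iff.mp j0.isLt
        have h2 : (j0 : ℕ) ≠ n := fun h => hl1last j0 hj0mem (Fin.ext h)
        omega
      have hcomm : Commute (S n) (l2.map (adjSwap (n+1))).prod := by
        apply Commute.list_prod_right
        intro x hx
        rw [List.mem_map] at hx
        obtain ⟨j, hj, rfl⟩ := hx
        have hjv : (j : ℕ) ≠ n - 1 := by
          intro h
          have : j = j0 := Fin.ext (by omega)
          exact hdisj j0 hj0mem j (List.mem_cons_of_mem _ hj) this.symm
        have hjn : (j : ℕ) ≠ n := fun h => hl2last j hj (Fin.ext h)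
        have : (j : ℕ) + 1 < n := by omega
        exact (commute_adjSwap (by simpa using this)).symm
      have key : (l1.map (adjSwap (n+1))).prod * S n * (l2.map (adjSwap (n+1))).prod
          = ((l1 ++ l2).map (adjSwap (n+1))).prod * S n := by
        rw [mul_assoc, hcomm.eq, List.map_append, List.prod_append, mul_assoc]
      rw [key]
      have hLnd : (l1 ++ l2).Nodup := by
        rw [List.nodup_append]
        exact ⟨hnd1, hnd2, fun a ha b hb => hdisj a ha b (List.mem_cons_of_mem _ hb)⟩
      have hLmem : ∀ i : Fin (n+1), i ≠ Fin.last n → i ∈ l1 ++ l2 := by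
        intro i hi
        have := hmem i
        rw [List.mem_append, List.mem_cons] at this
        rw [List.mem_append]
        rcases this with h | h | h
        · exact Or.inl h
        · exact absurd h hi
        · exact Or.inr h
      have hLlast : ∀ x ∈ l1 ++ l2, x ≠ Fin.last n := by
        intro x hx
        rw [List.mem_append] at hx
        rcases hx with h | h
        · exact hl1last x h
        · exact hl2last x h
      obtain ⟨m, hmnd, hmmem, hprod⟩ := sublist_package _ hLnd hLmem hLlast
      exact ⟨_, ⟨m, hmnd, hmmem, rfl⟩, Or.inr (by rw [hprod])⟩
  · rintro ⟨c, ⟨m, hmnd, hmmem, rfl⟩, hw | hw⟩ <;> subst hw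
    · refine ⟨Fin.last n :: m.map Fin.castSucc, ?_, ?_, ?_⟩
      · rw [List.nodup_cons]
        refine ⟨?_, hmnd.map (Fin.castSucc_injective _)⟩
        rw [List.mem_map]
        rintro ⟨a, _, ha⟩
        exact (Fin.castSucc_lt_last a).ne ha
      · intro i
        induction i using Fin.lastCases with
        | last => exact List.mem_cons_self
        | cast i => exact List.mem_cons_of_mem _ (List.mem_map_of_mem (hmmem i))
      · rw [List.map_cons, List.prod_cons, prod_map_castSucc, S]
    · refine ⟨m.map Fin.castSucc ++ [Fin.last n], ?_, ?_, ?_⟩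
      · rw [List.nodup_append]
        refine ⟨hmnd.map (Fin.castSucc_injective _), List.nodup_singleton _, ?_⟩
        intro a ha b hb
        rw [List.mem_map] at ha
        obtain ⟨x, _, rfl⟩ := ha
        rw [List.mem_singleton] at hb
        exact hb ▸ (Fin.castSucc_lt_last x).ne
      · intro i
        induction i using Fin.lastCases with
        | last => exact List.mem_append_right _ (List.mem_singleton_self _)
        | cast i => exact List.mem_append_left _ (List.mem_map_of_mem (hmmem i))
      · rw [List.map_append, List.prod_append, prod_map_castSucc, List.map_singleton,
          List.prod_singleton, S]


lemma insAfter {n : ℕ} {c : Equiv.Perm (Fin (n+1))} (h : Uni n c) :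
    Uni (n+1) (E n c * S n) := by
  obtain ⟨a, ha0, hcyc, m, ham, hinc, hdec⟩ := h
  have hmn : (m : ℕ) ≤ n := Nat.lt_succ_iff.mp m.isLt
  set f : Fin (n+2) → Fin (n+2) := fun i =>
    if h1 : (i : ℕ) ≤ (m : ℕ) then (a ⟨(i : ℕ), by omega⟩).castSucc
    else if h2 : (i : ℕ) = (m : ℕ) + 1 then Fin.last (n+1)
    else (a ⟨(i : ℕ) - 1, by omega⟩).castSucc with hf
  have hfa : ∀ (i : Fin (n+2)) (h : (i : ℕ) ≤ (m : ℕ)),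
      f i = (a ⟨(i : ℕ), by omega⟩).castSucc := by
    intro i h; simp only [hf]; rw [dif_pos h]
  have hfb : ∀ (i : Fin (n+2)) (h : (i : ℕ) = (m : ℕ) + 1), f i = Fin.last (n+1) := by
    intro i h; simp only [hf]; rw [dif_neg (by omega), dif_pos h]
  have hfc : ∀ (i : Fin (n+2)) (h : (m : ℕ) + 1 < (i : ℕ)),
      f i = (a ⟨(i : ℕ) - 1, by omega⟩).castSucc := by
    intro i h; simp only [hf]; rw [dif_neg (by omega), dif_neg (by omega)]
  have hinj : Function.Injective f := by
    intro i j hij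
    simp only [hf] at hij
    split_ifs at hij with h1 h2 h3 h4 h5 h6 h7 h8 h9 <;>
      first
        | (exact absurd hij (Fin.castSucc_lt_last _).ne)
        | (exact absurd hij.symm (Fin.castSucc_lt_last _).ne)
        | (exact Fin.ext (by omega))
        | (rw [Fin.castSucc_inj, EmbeddingLike.apply_eq_iff_eq, Fin.mk.injEq] at hij;
           exact Fin.ext (by omega))
  have hanel : ∀ (k : Fin (n+1)), k ≠ m → a k ≠ Fin.last n :=
    fun k hk h => hk (a.injective (h.trans ham.symm))
  have hcyc' : ∀ (k : ℕ) (h1 : k < n) (h2 : k < n + 1),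
      c (a ⟨k, h2⟩) = a ⟨k+1, by omega⟩ := by
    intro k h1 h2
    rw [hcyc]
    congr 1
    exact add_one_of_lt (by simpa using h1)
  have hcycl : c (a (Fin.last n)) = a 0 := by
    rw [hcyc]
    congr 1
    exact add_one_last (by simp)
  refine ⟨Equiv.ofBijective f (Finite.injective_iff_bijective.mp hinj), ?_, ?_, ?_⟩
  · show f 0 = 0
    rw [hfa 0 (by simp)]
    have h0 : (⟨((0 : Fin (n+2)) : ℕ), Nat.succ_pos n⟩ : Fin (n+1)) = 0 := rfl
    rw [h0, ha0, Fin.castSucc_zero]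
  · intro i
    show (E n c * S n) (f i) = f (i + 1)
    by_cases h1 : (i : ℕ) < (m : ℕ)
    · rw [hfa i (le_of_lt h1)]
      rw [ES_castSucc c (hanel _ (fun h => by
        have := congrArg Fin.val h; simp at this; omega))]
      rw [hcyc' _ (by omega) (by omega)]
      rw [add_one_of_lt (n := n+1) (by omega), hfa _ (by simpa using h1)]
    · by_cases h2 : (i : ℕ) = (m : ℕ)
      · rw [hfa i (le_of_eq h2)]
        have hm : (⟨(i : ℕ), by omega⟩ : Fin (n+1)) = m := Fin.ext h2
        rw [hm, ham, ES_K]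
        rw [add_one_of_lt (n := n+1) (by omega), hfb _ (by simp [h2])]
      · by_cases h3 : (i : ℕ) = (m : ℕ) + 1
        · rw [hfb i h3, ES_N, ← ham]
          by_cases h4 : (m : ℕ) < n
          · have hmm : a m = a ⟨(m : ℕ), by omega⟩ := by congr 1
            rw [hmm, hcyc' _ h4 (by omega)]
            rw [add_one_of_lt (n := n+1) (by omega), hfc _ (by simp [h3])]
            rw [Fin.castSucc_inj]
            exact congrArg a (Fin.ext (show (m:ℕ)+1 = (i:ℕ)+1-1 by omega))
          · have hmlast : m = Fin.last n := Fin.ext (by simp only [Fin.val_last]; omega)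
            rw [hmlast, hcycl]
            rw [add_one_last (n := n+1) (by omega), hfa 0 (by simp)]
            rfl
        · have h5 : (m : ℕ) + 1 < (i : ℕ) := by omega
          rw [hfc i h5]
          rw [ES_castSucc c (hanel _ (fun h => by
            have := congrArg Fin.val h; simp at this; omega))]
          by_cases h6 : (i : ℕ) ≤ n
          · rw [hcyc' _ (by omega) (by omega)]
            rw [add_one_of_lt (n := n+1) (by omega), hfc _ (by show (m:ℕ)+1 < (i:ℕ)+1; omega)]
            rw [Fin.castSucc_inj]
            exact congrArg a (Fin.ext (show (i:ℕ)-1+1 = (i:ℕ)+1-1 by omega))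
          · have h7 : ((⟨(i : ℕ) - 1, by omega⟩ : Fin (n+1))) = Fin.last n :=
              Fin.ext (by simp; omega)
            rw [h7, hcycl]
            rw [add_one_last (n := n+1) (by omega), hfa 0 (by simp)]
            rfl
  · refine ⟨⟨(m : ℕ) + 1, by omega⟩, ?_, ?_, ?_⟩
    · exact hfb _ rfl
    · intro i j hij hjm
      rw [Fin.lt_def] at hij
      rw [Fin.le_def] at hjm
      simp only at hjm
      show f i < f j
      by_cases h1 : (j : ℕ) ≤ (m : ℕ)
      · rw [hfa i (by omega), hfa j h1, Fin.castSucc_lt_castSucc_iff]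
        exact hinc _ _ (by rw [Fin.lt_def]; simpa using hij) (by rw [Fin.le_def]; simpa using h1)
      · rw [hfa i (by omega), hfb j (by omega)]
        exact Fin.castSucc_lt_last _
    · intro i j him hij
      rw [Fin.lt_def] at hij
      rw [Fin.le_def] at him
      simp only at him
      show f j < f i
      by_cases h1 : (i : ℕ) = (m : ℕ) + 1
      · rw [hfb i h1, hfc j (by omega)]
        exact Fin.castSucc_lt_last _
      · rw [hfc i (by omega), hfc j (by omega), Fin.castSucc_lt_castSucc_iff]
        exact hdec _ _ (by rw [Fin.le_def]; simp; omega) (by rw [Fin.lt_def]; simp; omega)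


lemma insBefore {n : ℕ} {c : Equiv.Perm (Fin (n+1))} (h : Uni n c) :
    Uni (n+1) (S n * E n c) := by
  obtain ⟨a, ha0, hcyc, m, ham, hinc, hdec⟩ := h
  have hmn : (m : ℕ) ≤ n := Nat.lt_succ_iff.mp m.isLt
  by_cases hm0 : (m : ℕ) = 0
  · -- then n = 0 and c = 1
    have hn : n = 0 := by
      have h1 : a 0 = Fin.last n := by rw [← ham]; congr 1; exact (Fin.ext hm0.symm)
      have := h1.symm.trans ha0
      simpa using congrArg Fin.val this
    subst hn
    have hc1 : c = 1 := by
      ext x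
      simp only [Equiv.Perm.coe_one, id_eq]
      omega
    have h' : Uni 0 c := ⟨a, ha0, hcyc, m, ham, hinc, hdec⟩
    have := insAfter h'
    rw [hc1, E_one, one_mul] at this
    rwa [hc1, E_one, mul_one]
  have hm1 : 1 ≤ (m : ℕ) := by omega
  have hn1 : 1 ≤ n := by omega
  set f : Fin (n+2) → Fin (n+2) := fun i =>
    if h1 : (i : ℕ) < (m : ℕ) then (a ⟨(i : ℕ), by omega⟩).castSucc
    else if h2 : (i : ℕ) = (m : ℕ) then Fin.last (n+1)
    else (a ⟨(i : ℕ) - 1, by omega⟩).castSucc with hf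
  have hfa : ∀ (i : Fin (n+2)) (h : (i : ℕ) < (m : ℕ)),
      f i = (a ⟨(i : ℕ), by omega⟩).castSucc := by
    intro i h; simp only [hf]; rw [dif_pos h]
  have hfb : ∀ (i : Fin (n+2)) (h : (i : ℕ) = (m : ℕ)), f i = Fin.last (n+1) := by
    intro i h; simp only [hf]; rw [dif_neg (by omega), dif_pos h]
  have hfc : ∀ (i : Fin (n+2)) (h : (m : ℕ) < (i : ℕ)),
      f i = (a ⟨(i : ℕ) - 1, by omega⟩).castSucc := by
    intro i h; simp only [hf]; rw [dif_neg (by omega), dif_neg (by omega)]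
  have hinj : Function.Injective f := by
    intro i j hij
    simp only [hf] at hij
    split_ifs at hij with h1 h2 h3 h4 h5 h6 h7 h8 <;>
      first
        | (exact absurd hij (Fin.castSucc_lt_last _).ne)
        | (exact absurd hij.symm (Fin.castSucc_lt_last _).ne)
        | (exact Fin.ext (by omega))
        | (rw [Fin.castSucc_inj, EmbeddingLike.apply_eq_iff_eq, Fin.mk.injEq] at hij;
           exact Fin.ext (by omega))
  have hanel : ∀ (k : Fin (n+1)), k ≠ m → a k ≠ Fin.last n :=
    fun k hk h => hk (a.injective (h.trans ham.symm))
  have hcyc' : ∀ (k : ℕ) (h1 : k < n) (h2 : k < n + 1),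
      c (a ⟨k, h2⟩) = a ⟨k+1, by omega⟩ := by
    intro k h1 h2
    rw [hcyc]
    congr 1
    exact add_one_of_lt (by simpa using h1)
  have hcycl : c (a (Fin.last n)) = a 0 := by
    rw [hcyc]
    congr 1
    exact add_one_last (by simp)
  refine ⟨Equiv.ofBijective f (Finite.injective_iff_bijective.mp hinj), ?_, ?_, ?_⟩
  · show f 0 = 0
    rw [hfa 0 (by rw [Fin.val_zero]; omega)]
    have h0 : (⟨((0 : Fin (n+2)) : ℕ), Nat.succ_pos n⟩ : Fin (n+1)) = 0 := rfl
    rw [h0, ha0, Fin.castSucc_zero]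
  · intro i
    show (S n * E n c) (f i) = f (i + 1)
    by_cases h1 : (i : ℕ) + 1 < (m : ℕ)
    · rw [hfa i (by omega)]
      rw [SE_castSucc₁ c (by
        rw [hcyc' _ (by omega) (by omega)]
        exact hanel _ (fun h => by
          have := congrArg Fin.val h; simp at this; omega))]
      rw [hcyc' _ (by omega) (by omega)]
      rw [add_one_of_lt (n := n+1) (by omega), hfa _ (by show (i:ℕ)+1 < (m:ℕ); omega)]
    · by_cases h2 : (i : ℕ) + 1 = (m : ℕ)
      · rw [hfa i (by omega)]
        rw [SE_castSucc₂ c (by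
          rw [hcyc' _ (by omega) (by omega)]
          rw [show (⟨(i:ℕ)+1, by omega⟩ : Fin (n+1)) = m from Fin.ext h2, ham])]
        rw [add_one_of_lt (n := n+1) (by omega), hfb _ (by show (i:ℕ)+1 = (m:ℕ); omega)]
      · by_cases h3 : (i : ℕ) = (m : ℕ)
        · rw [hfb i h3, SE_N, ← ham]
          rw [add_one_of_lt (n := n+1) (by omega), hfc _ (by show (m:ℕ) < (i:ℕ)+1; omega)]
          rw [Fin.castSucc_inj]
          exact congrArg a (Fin.ext (show (m:ℕ) = (i:ℕ)+1-1 by omega))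
        · have h5 : (m : ℕ) < (i : ℕ) := by omega
          rw [hfc i h5]
          by_cases h6 : (i : ℕ) ≤ n
          · rw [SE_castSucc₁ c (by
              rw [hcyc' _ (by omega) (by omega)]
              exact hanel _ (fun h => by
                have := congrArg Fin.val h; simp at this; omega))]
            rw [hcyc' _ (by omega) (by omega)]
            rw [add_one_of_lt (n := n+1) (by omega), hfc _ (by show (m:ℕ) < (i:ℕ)+1; omega)]
            rw [Fin.castSucc_inj]
            exact congrArg a (Fin.ext (show (i:ℕ)-1+1 = (i:ℕ)+1-1 by omega))
          · have h7 : ((⟨(i : ℕ) - 1, by omega⟩ : Fin (n+1))) = Fin.last n :=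
              Fin.ext (by simp only [Fin.val_last]; omega)
            rw [h7]
            rw [SE_castSucc₁ c (by
              rw [hcycl, ha0]
              intro hlz
              have := congrArg Fin.val hlz
              simp only [Fin.val_zero, Fin.val_last] at this
              omega)]
            rw [hcycl, ha0]
            rw [add_one_last (n := n+1) (by omega), hfa 0 (by rw [Fin.val_zero]; omega)]
            have h0 : (⟨((0 : Fin (n+2)) : ℕ), Nat.succ_pos n⟩ : Fin (n+1)) = 0 := rfl
            rw [h0, ha0]
  · refine ⟨⟨(m : ℕ), by omega⟩, ?_, ?_, ?_⟩
    · exact hfb _ rfl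
    · intro i j hij hjm
      rw [Fin.lt_def] at hij
      rw [Fin.le_def] at hjm
      simp only at hjm
      show f i < f j
      by_cases h1 : (j : ℕ) < (m : ℕ)
      · rw [hfa i (by omega), hfa j h1, Fin.castSucc_lt_castSucc_iff]
        exact hinc _ _ (by rw [Fin.lt_def]; simpa using hij) (by rw [Fin.le_def]; simp; omega)
      · rw [hfa i (by omega), hfb j (by omega)]
        exact Fin.castSucc_lt_last _
    · intro i j him hij
      rw [Fin.lt_def] at hij
      rw [Fin.le_def] at him
      simp only at him
      show f j < f i
      by_cases h1 : (i : ℕ) = (m : ℕ)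
      · rw [hfb i h1, hfc j (by omega)]
        exact Fin.castSucc_lt_last _
      · rw [hfc i (by omega), hfc j (by omega), Fin.castSucc_lt_castSucc_iff]
        exact hdec _ _ (by rw [Fin.le_def]; simp; omega) (by rw [Fin.lt_def]; simp; omega)


/-! ### restriction of a permutation fixing the last point -/

def restrict {n : ℕ} (c' : Equiv.Perm (Fin (n+2)))
    (h : c' (Fin.last (n+1)) = Fin.last (n+1)) : Equiv.Perm (Fin (n+1)) where
  toFun x := (c' x.castSucc).castPred
    (fun he => (Fin.castSucc_lt_last x).ne (c'.injective (he.trans h.symm)))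
  invFun x := (c'⁻¹ x.castSucc).castPred
    (fun he => (Fin.castSucc_lt_last x).ne (by
      have h2 : x.castSucc = c' (Fin.last (n+1)) := by
        rw [← he, ← Equiv.Perm.mul_apply, mul_inv_cancel, Equiv.Perm.one_apply]
      rw [h] at h2
      exact h2))
  left_inv x := by
    apply Fin.castSucc_injective
    rw [Fin.castSucc_castPred, Fin.castSucc_castPred, ← Equiv.Perm.mul_apply, inv_mul_cancel, Equiv.Perm.one_apply]
  right_inv x := by
    apply Fin.castSucc_injective
    rw [Fin.castSucc_castPred, Fin.castSucc_castPred, ← Equiv.Perm.mul_apply, mul_inv_cancel, Equiv.Perm.one_apply]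

lemma restrict_castSucc {n : ℕ} (c' : Equiv.Perm (Fin (n+2)))
    (h : c' (Fin.last (n+1)) = Fin.last (n+1)) (x : Fin (n+1)) :
    ((restrict c' h) x).castSucc = c' x.castSucc :=
  Fin.castSucc_castPred _ (fun he => (Fin.castSucc_lt_last x).ne (c'.injective (he.trans h.symm)))

lemma E_restrict {n : ℕ} (c' : Equiv.Perm (Fin (n+2)))
    (h : c' (Fin.last (n+1)) = Fin.last (n+1)) :
    E n (restrict c' h) = c' := by
  ext x
  induction x using Fin.lastCases with
  | last => rw [E_last, h]
  | cast i => rw [E_castSucc, restrict_castSucc]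

/-! ### building `Uni` from a reduced cycle listing -/

lemma buildUni {n : ℕ} (c : Equiv.Perm (Fin (n+1))) (g : Fin (n+1) → Fin (n+2))
    (hgN : ∀ j, g j ≠ Fin.last (n+1))
    (hginj : Function.Injective g)
    (hg0 : g 0 = 0)
    (hkey : ∀ j, E n c (g j) = g (j + 1))
    (mb : Fin (n+1)) (hpeak : g mb = (Fin.last n).castSucc)
    (hincg : ∀ i j : Fin (n+1), i < j → j ≤ mb → g i < g j)
    (hdecg : ∀ i j : Fin (n+1), mb ≤ i → i < j → g j < g i) : Uni n c := by
  set b : Fin (n+1) → Fin (n+1) := fun j => (g j).castPred (hgN j) with hb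
  have hbcs : ∀ j, (b j).castSucc = g j := fun j => Fin.castSucc_castPred _ _
  have hbinj : Function.Injective b := by
    intro i j hij
    apply hginj
    rw [← hbcs, ← hbcs, hij]
  refine ⟨Equiv.ofBijective b (Finite.injective_iff_bijective.mp hbinj), ?_, ?_, mb, ?_, ?_, ?_⟩
  · show b 0 = 0
    apply Fin.castSucc_injective
    rw [hbcs, hg0, Fin.castSucc_zero]
  · intro i
    show c (b i) = b (i + 1)
    apply Fin.castSucc_injective
    rw [hbcs, ← E_castSucc n c, hbcs]
    exact hkey i
  · show b mb = Fin.last n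
    apply Fin.castSucc_injective
    rw [hbcs, hpeak]
  · intro i j hij hjm
    show b i < b j
    rw [← Fin.castSucc_lt_castSucc_iff, hbcs, hbcs]
    exact hincg i j hij hjm
  · intro i j him hij
    show b j < b i
    rw [← Fin.castSucc_lt_castSucc_iff, hbcs, hbcs]
    exact hdecg i j him hij


set_option maxHeartbeats 2000000 in
lemma rem {n : ℕ} {w : Equiv.Perm (Fin (n+2))} (h : Uni (n+1) w) :
    ∃ c, Uni n c ∧ (w = S n * E n c ∨ w = E n c * S n) := by
  obtain ⟨a, ha0, hcyc, m, ham, hinc, hdec⟩ := h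
  have hm1 : 1 ≤ (m : ℕ) := by
    rcases Nat.eq_zero_or_pos (m : ℕ) with h0 | h0
    · exfalso
      have hm0 : m = 0 := Fin.ext h0
      rw [hm0, ha0] at ham
      have := congrArg Fin.val ham
      simp at this
    · exact h0
  have hmn : (m : ℕ) ≤ n + 1 := Nat.lt_succ_iff.mp m.isLt
  have hcyc' : ∀ (k : ℕ) (h1 : k < n+1) (h2 : k < n+2),
      w (a ⟨k, h2⟩) = a ⟨k+1, by omega⟩ := by
    intro k h1 h2
    rw [hcyc]
    congr 1
    exact add_one_of_lt (by simpa using h1)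
  have hcycl : w (a (Fin.last (n+1))) = a 0 := by
    rw [hcyc]
    congr 1
    exact add_one_last (by simp)
  set t : Fin (n+2) := a.symm ((Fin.last n).castSucc) with ht
  have hat : a t = (Fin.last n).castSucc := a.apply_symm_apply _
  have htm : t ≠ m := by
    intro h'
    rw [h', ham] at hat
    exact (Fin.castSucc_lt_last _).ne hat.symm
  have htmv : (t : ℕ) ≠ (m : ℕ) := fun hh => htm (Fin.ext hh)
  have hsmall : ∀ (k : Fin (n+2)), k ≠ t → k ≠ m → (a k : ℕ) < n := by
    intro k h1 h2
    have e1 : a k ≠ (Fin.last n).castSucc := fun he => h1 (by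
      rw [← hat] at he; exact a.injective he)
    have e2 : a k ≠ Fin.last (n+1) := fun he => h2 (by
      rw [← ham] at he; exact a.injective he)
    have l1 : (a k : ℕ) < n + 2 := (a k).isLt
    have v1 : (a k : ℕ) ≠ n := fun hv => e1 (Fin.ext (by
      simp only [Fin.coe_castSucc, Fin.val_last]; exact hv))
    have v2 : (a k : ℕ) ≠ n+1 := fun hv => e2 (Fin.ext (by
      simp only [Fin.val_last]; exact hv))
    omega
  have hfix : ∀ (k : Fin (n+2)), k ≠ t → k ≠ m → S n (a k) = a k := by
    intro k h1 h2
    apply S_fix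
    · intro he; exact h1 (a.injective (he.trans hat.symm))
    · intro he; exact h2 (a.injective (he.trans ham.symm))
  have hcases : (t : ℕ) + 1 = (m : ℕ) ∨ (t : ℕ) = (m : ℕ) + 1 := by
    by_contra hcon
    push_neg at hcon
    rcases Nat.lt_or_ge (t : ℕ) (m : ℕ) with hlt | hge
    · have h1 : a t < a ⟨(t : ℕ)+1, by omega⟩ :=
        hinc _ _ (by rw [Fin.lt_def]; exact Nat.lt_succ_self _)
          (by rw [Fin.le_def]; show (t:ℕ)+1 ≤ (m:ℕ); omega)
      have h2 : (a ⟨(t : ℕ)+1, by omega⟩ : ℕ) < n := by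
        apply hsmall
        · intro hh
          have h2 := congrArg Fin.val hh
          have h3 : (t:ℕ)+1 = (t:ℕ) := h2
          omega
        · intro hh
          have h2 := congrArg Fin.val hh
          have h3 : (t:ℕ)+1 = (m:ℕ) := h2
          omega
      rw [hat, Fin.lt_def] at h1
      simp only [Fin.coe_castSucc, Fin.val_last] at h1
      omega
    · have hge2 : (m : ℕ) + 1 < (t : ℕ) := by omega
      have h1 : a t < a ⟨(t : ℕ)-1, by omega⟩ :=
        hdec _ _ (by rw [Fin.le_def]; show (m:ℕ) ≤ (t:ℕ)-1; omega)
          (by rw [Fin.lt_def]; show (t:ℕ)-1 < (t:ℕ); omega)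
      have h2 : (a ⟨(t : ℕ)-1, by omega⟩ : ℕ) < n := by
        apply hsmall
        · intro hh
          have h2 := congrArg Fin.val hh
          have h3 : (t:ℕ)-1 = (t:ℕ) := h2
          omega
        · intro hh
          have h2 := congrArg Fin.val hh
          have h3 : (t:ℕ)-1 = (m:ℕ) := h2
          omega
      rw [hat, Fin.lt_def] at h1
      simp only [Fin.coe_castSucc, Fin.val_last] at h1
      omega
  -- the reduced listing
  set g : Fin (n+1) → Fin (n+2) := fun j =>
    if (j : ℕ) < (m : ℕ) then a ⟨(j : ℕ), by omega⟩ else a ⟨(j : ℕ)+1, by omega⟩ with hg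
  have hga : ∀ (j : Fin (n+1)) (h : (j : ℕ) < (m : ℕ)), g j = a ⟨(j : ℕ), by omega⟩ := by
    intro j h; simp only [hg]; rw [if_pos h]
  have hgb : ∀ (j : Fin (n+1)) (h : (m : ℕ) ≤ (j : ℕ)), g j = a ⟨(j : ℕ)+1, by omega⟩ := by
    intro j h; simp only [hg]; rw [if_neg (by omega)]
  have hgN : ∀ j, g j ≠ Fin.last (n+1) := by
    intro j
    by_cases hj : (j : ℕ) < (m : ℕ)
    · rw [hga j hj, ← ham]
      intro hh
      have h2 := congrArg Fin.val (a.injective hh)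
      have h3 : (j:ℕ) = (m:ℕ) := h2
      omega
    · rw [hgb j (by omega), ← ham]
      intro hh
      have h2 := congrArg Fin.val (a.injective hh)
      have h3 : (j:ℕ)+1 = (m:ℕ) := h2
      omega
  have hginj : Function.Injective g := by
    intro i j hij
    by_cases hi : (i : ℕ) < (m : ℕ) <;> by_cases hj : (j : ℕ) < (m : ℕ)
    · rw [hga i hi, hga j hj] at hij
      have h2 := congrArg Fin.val (a.injective hij)
      have h3 : (i:ℕ) = (j:ℕ) := h2
      exact Fin.ext h3
    · rw [hga i hi, hgb j (by omega)] at hij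
      have h2 := congrArg Fin.val (a.injective hij)
      have h3 : (i:ℕ) = (j:ℕ)+1 := h2
      exact absurd h3 (by omega)
    · rw [hgb i (by omega), hga j hj] at hij
      have h2 := congrArg Fin.val (a.injective hij)
      have h3 : (i:ℕ)+1 = (j:ℕ) := h2
      exact absurd h3 (by omega)
    · rw [hgb i (by omega), hgb j (by omega)] at hij
      have h2 := congrArg Fin.val (a.injective hij)
      have h3 : (i:ℕ)+1 = (j:ℕ)+1 := h2
      exact Fin.ext (by omega)
  have hg0 : g 0 = 0 := by
    rw [hga 0 (by rw [Fin.val_zero]; omega)]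
    have h00 : (⟨((0 : Fin (n+1)) : ℕ), by omega⟩ : Fin (n+2)) = 0 := rfl
    rw [h00, ha0]
  rcases hcases with htv | htv
  · -- K sits just before N in the cycle : w = E n c * S n
    have htm1 : t + 1 = m := by
      rw [add_one_of_lt (n := n+1) (show (t:ℕ) < n+1 by omega)]
      exact Fin.ext (show (t:ℕ)+1 = (m:ℕ) by omega)
    have hc'N : (w * S n) (Fin.last (n+1)) = Fin.last (n+1) := by
      rw [Equiv.Perm.mul_apply, S_N, ← hat, hcyc, htm1, ham]
    have hE : E n (restrict (w * S n) hc'N) = w * S n := E_restrict _ _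
    refine ⟨restrict (w * S n) hc'N, ?_, Or.inr (by rw [hE, mul_assoc, S_mul_S, mul_one])⟩
    apply buildUni _ g hgN hginj hg0 ?_ ⟨(m : ℕ)-1, by omega⟩ ?_ ?_ ?_
    · -- key cycle identity
      intro j
      rw [hE, Equiv.Perm.mul_apply]
      by_cases hj1 : (j : ℕ) + 1 < (m : ℕ)
      · rw [hga j (by omega),
          hfix _ (fun hh => by
              have h2 := congrArg Fin.val hh
              have h3 : (j:ℕ) = (t:ℕ) := h2
              omega)
            (fun hh => by
              have h2 := congrArg Fin.val hh
              have h3 : (j:ℕ) = (m:ℕ) := h2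
              omega),
          hcyc' (j : ℕ) (by omega) (by omega),
          add_one_of_lt (n := n) (show (j:ℕ) < n by omega),
          hga ⟨(j:ℕ)+1, by omega⟩ (by show (j:ℕ)+1 < (m:ℕ); omega)]
      · by_cases hj2 : (j : ℕ) + 1 = (m : ℕ)
        · rw [hga j (by omega),
            show (⟨(j:ℕ), by omega⟩ : Fin (n+2)) = t from
              Fin.ext (show (j:ℕ) = (t:ℕ) by omega),
            hat, S_K, ← ham, hcyc]
          by_cases hm2 : (m : ℕ) ≤ n
          · rw [add_one_of_lt (n := n+1) (show (m:ℕ) < n+1 by omega),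
              add_one_of_lt (n := n) (show (j:ℕ) < n by omega),
              hgb ⟨(j:ℕ)+1, by omega⟩ (by show (m:ℕ) ≤ (j:ℕ)+1; omega)]
            refine congrArg a (Fin.ext ?_)
            show (m:ℕ)+1 = (j:ℕ)+1+1
            omega
          · rw [add_one_last (n := n+1) (show (m:ℕ) = n+1 by omega),
              add_one_last (n := n) (show (j:ℕ) = n by omega), hg0, ha0]
        · rw [hgb j (by omega),
            hfix _ (fun hh => by
                have h2 := congrArg Fin.val hh
                have h3 : (j:ℕ)+1 = (t:ℕ) := h2
                omega)
              (fun hh => by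
                have h2 := congrArg Fin.val hh
                have h3 : (j:ℕ)+1 = (m:ℕ) := h2
                omega)]
          by_cases hj3 : (j : ℕ) < n
          · rw [hcyc' ((j : ℕ)+1) (by omega) (by omega),
              add_one_of_lt (n := n) hj3,
              hgb ⟨(j:ℕ)+1, by omega⟩ (by show (m:ℕ) ≤ (j:ℕ)+1; omega)]
          · rw [show (⟨(j:ℕ)+1, by omega⟩ : Fin (n+2)) = Fin.last (n+1) from
                Fin.ext (show (j:ℕ)+1 = n+1 by omega),
              hcycl, add_one_last (n := n) (show (j:ℕ) = n by omega), hg0, ha0]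
    · -- peak
      rw [hga ⟨(m:ℕ)-1, by omega⟩ (by show (m:ℕ)-1 < (m:ℕ); omega),
        show (⟨((⟨(m:ℕ)-1, by omega⟩ : Fin (n+1)) : ℕ), by omega⟩ : Fin (n+2)) = t from
          Fin.ext (show (m:ℕ)-1 = (t:ℕ) by omega), hat]
    · -- increasing
      intro i j hij hjm
      rw [Fin.lt_def] at hij
      rw [Fin.le_def] at hjm
      have hjm' : (j : ℕ) ≤ (m : ℕ) - 1 := hjm
      rw [hga i (by omega), hga j (by omega)]
      exact hinc _ _ (by rw [Fin.lt_def]; show (i:ℕ) < (j:ℕ); omega)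
        (by rw [Fin.le_def]; show (j:ℕ) ≤ (m:ℕ); omega)
    · -- decreasing
      intro i j him hij
      rw [Fin.lt_def] at hij
      rw [Fin.le_def] at him
      have him' : (m : ℕ) - 1 ≤ (i : ℕ) := him
      by_cases hi : (i : ℕ) = (m : ℕ) - 1
      · rw [hga i (by omega),
          show (⟨(i:ℕ), by omega⟩ : Fin (n+2)) = t from
            Fin.ext (show (i:ℕ) = (t:ℕ) by omega),
          hat, hgb j (by omega)]
        have h2 : (a ⟨(j:ℕ)+1, by omega⟩ : ℕ) < n := by
          apply hsmall
          · intro hh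
            have h2 := congrArg Fin.val hh
            have h3 : (j:ℕ)+1 = (t:ℕ) := h2
            omega
          · intro hh
            have h2 := congrArg Fin.val hh
            have h3 : (j:ℕ)+1 = (m:ℕ) := h2
            omega
        rw [Fin.lt_def]
        simp only [Fin.coe_castSucc, Fin.val_last]
        omega
      · rw [hgb i (by omega), hgb j (by omega)]
        exact hdec _ _ (by rw [Fin.le_def]; show (m:ℕ) ≤ (i:ℕ)+1; omega)
          (by rw [Fin.lt_def]; show (i:ℕ)+1 < (j:ℕ)+1; omega)
  · -- K sits just after N in the cycle : w = S n * E n c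
    have hmn' : (m : ℕ) ≤ n := by
      have := t.isLt
      omega
    have hn1 : 1 ≤ n := by omega
    have hmt : m + 1 = t := by
      rw [add_one_of_lt (n := n+1) (show (m:ℕ) < n+1 by omega)]
      exact Fin.ext (show (m:ℕ)+1 = (t:ℕ) by omega)
    have hwN : w (Fin.last (n+1)) = (Fin.last n).castSucc := by
      conv_lhs => rw [← ham]
      rw [hcyc, hmt, hat]
    have hc'N : (S n * w) (Fin.last (n+1)) = Fin.last (n+1) := by
      rw [Equiv.Perm.mul_apply, hwN, S_K]
    have hE : E n (restrict (S n * w) hc'N) = S n * w := E_restrict _ _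
    refine ⟨restrict (S n * w) hc'N, ?_, Or.inl (by rw [hE, ← mul_assoc, S_mul_S, one_mul])⟩
    apply buildUni _ g hgN hginj hg0 ?_ ⟨(m : ℕ), by omega⟩ ?_ ?_ ?_
    · -- key cycle identity
      intro j
      rw [hE, Equiv.Perm.mul_apply]
      by_cases hj : (j : ℕ) < (m : ℕ)
      · rw [hga j hj, hcyc' (j : ℕ) (by omega) (by omega)]
        by_cases hj2 : (j : ℕ) + 1 < (m : ℕ)
        · rw [hfix _ (fun hh => by
                have h2 := congrArg Fin.val hh
                have h3 : (j:ℕ)+1 = (t:ℕ) := h2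
                omega)
              (fun hh => by
                have h2 := congrArg Fin.val hh
                have h3 : (j:ℕ)+1 = (m:ℕ) := h2
                omega),
            add_one_of_lt (n := n) (show (j:ℕ) < n by omega),
            hga ⟨(j:ℕ)+1, by omega⟩ (by show (j:ℕ)+1 < (m:ℕ); omega)]
        · rw [show (⟨(j:ℕ)+1, by omega⟩ : Fin (n+2)) = m from
              Fin.ext (show (j:ℕ)+1 = (m:ℕ) by omega),
            ham, S_N,
            add_one_of_lt (n := n) (show (j:ℕ) < n by omega),
            hgb ⟨(j:ℕ)+1, by omega⟩ (by show (m:ℕ) ≤ (j:ℕ)+1; omega),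
            show (⟨((⟨(j:ℕ)+1, by omega⟩ : Fin (n+1)) : ℕ)+1, by omega⟩ : Fin (n+2)) = t from
              Fin.ext (show (j:ℕ)+1+1 = (t:ℕ) by omega), hat]
      · rw [hgb j (by omega)]
        by_cases hj3 : (j : ℕ) < n
        · rw [hcyc' ((j : ℕ)+1) (by omega) (by omega),
            hfix _ (fun hh => by
                have h2 := congrArg Fin.val hh
                have h3 : (j:ℕ)+1+1 = (t:ℕ) := h2
                omega)
              (fun hh => by
                have h2 := congrArg Fin.val hh
                have h3 : (j:ℕ)+1+1 = (m:ℕ) := h2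
                omega),
            add_one_of_lt (n := n) hj3,
            hgb ⟨(j:ℕ)+1, by omega⟩ (by show (m:ℕ) ≤ (j:ℕ)+1; omega)]
        · rw [show (⟨(j:ℕ)+1, by omega⟩ : Fin (n+2)) = Fin.last (n+1) from
              Fin.ext (show (j:ℕ)+1 = n+1 by omega),
            hcycl, ha0,
            S_fix n (fun hh => by
                have h2 := congrArg Fin.val hh
                have h3 : (0:ℕ) = n := by simpa using h2
                omega)
              (fun hh => by
                have h2 := congrArg Fin.val hh
                have h3 : (0:ℕ) = n+1 := by simpa using h2
                omega),
            add_one_last (n := n) (show (j:ℕ) = n by omega), hg0]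
    · -- peak
      rw [hgb ⟨(m:ℕ), by omega⟩ (by show (m:ℕ) ≤ (m:ℕ); omega),
        show (⟨((⟨(m:ℕ), by omega⟩ : Fin (n+1)) : ℕ)+1, by omega⟩ : Fin (n+2)) = t from
          Fin.ext (show (m:ℕ)+1 = (t:ℕ) by omega), hat]
    · -- increasing
      intro i j hij hjm
      rw [Fin.lt_def] at hij
      rw [Fin.le_def] at hjm
      have hjm' : (j : ℕ) ≤ (m : ℕ) := hjm
      by_cases hj : (j : ℕ) < (m : ℕ)
      · rw [hga i (by omega), hga j (by omega)]
        exact hinc _ _ (by rw [Fin.lt_def]; show (i:ℕ) < (j:ℕ); omega)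
          (by rw [Fin.le_def]; show (j:ℕ) ≤ (m:ℕ); omega)
      · rw [hga i (by omega), hgb j (by omega),
          show (⟨(j:ℕ)+1, by omega⟩ : Fin (n+2)) = t from
            Fin.ext (show (j:ℕ)+1 = (t:ℕ) by omega), hat]
        have h2 : (a ⟨(i:ℕ), by omega⟩ : ℕ) < n := by
          apply hsmall
          · intro hh
            have h2 := congrArg Fin.val hh
            have h3 : (i:ℕ) = (t:ℕ) := h2
            omega
          · intro hh
            have h2 := congrArg Fin.val hh
            have h3 : (i:ℕ) = (m:ℕ) := h2
            omega
        rw [Fin.lt_def]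
        simp only [Fin.coe_castSucc, Fin.val_last]
        omega
    · -- decreasing
      intro i j him hij
      rw [Fin.lt_def] at hij
      rw [Fin.le_def] at him
      have him' : (m : ℕ) ≤ (i : ℕ) := him
      by_cases hi : (i : ℕ) = (m : ℕ)
      · rw [hgb i (by omega),
          show (⟨(i:ℕ)+1, by omega⟩ : Fin (n+2)) = t from
            Fin.ext (show (i:ℕ)+1 = (t:ℕ) by omega),
          hat, hgb j (by omega)]
        have h2 : (a ⟨(j:ℕ)+1, by omega⟩ : ℕ) < n := by
          apply hsmall
          · intro hh
            have h2 := congrArg Fin.val hh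
            have h3 : (j:ℕ)+1 = (t:ℕ) := h2
            omega
          · intro hh
            have h2 := congrArg Fin.val hh
            have h3 : (j:ℕ)+1 = (m:ℕ) := h2
            omega
        rw [Fin.lt_def]
        simp only [Fin.coe_castSucc, Fin.val_last]
        omega
      · rw [hgb i (by omega), hgb j (by omega)]
        exact hdec _ _ (by rw [Fin.le_def]; show (m:ℕ) ≤ (i:ℕ)+1; omega)
          (by rw [Fin.lt_def]; show (i:ℕ)+1 < (j:ℕ)+1; omega)


lemma main : ∀ (n : ℕ) (w : Equiv.Perm (Fin (n+1))), IsStdCoxeter n w ↔ Uni n w := by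
  intro n
  induction n with
  | zero =>
    intro w
    have hw : w = 1 := by
      ext x
      simp only [Equiv.Perm.coe_one, id_eq]
      omega
    constructor
    · intro _
      refine ⟨Equiv.refl _, rfl, ?_, 0, rfl, ?_, ?_⟩
      · intro i
        exact Fin.ext (by omega)
      · intro i j hij hjm
        rw [Fin.lt_def] at hij
        rw [Fin.lt_def]
        omega
      · intro i j him hij
        rw [Fin.lt_def] at hij
        rw [Fin.lt_def]
        omega
    · intro _
      exact ⟨[], List.nodup_nil, fun i => i.elim0, by rw [hw]; rfl⟩
  | succ n ih =>
    intro w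
    rw [NF]
    constructor
    · rintro ⟨c, hc, hw | hw⟩ <;> subst hw
      · exact insBefore ((ih c).mp hc)
      · exact insAfter ((ih c).mp hc)
    · intro h
      obtain ⟨c, hc, hor⟩ := rem h
      exact ⟨c, (ih c).mpr hc, hor⟩

end StdCox

/-- A permutation `w` of `{1,…,n}` is a standard Coxeter element iff it is a single
`n`-cycle whose cycle notation `(a₁,…,aₙ)` starting at `a₁ = 1` (the least element)
increases strictly up to the largest element `n` and then decreases strictly. -/
theorem stmt0 (n : ℕ) (w : Equiv.Perm (Fin (n+1))) :
    IsStdCoxeter n w ↔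
      ∃ a : Fin (n+1) ≃ Fin (n+1), a 0 = 0 ∧ (∀ i, w (a i) = a (i + 1)) ∧
        ∃ m : Fin (n+1), a m = Fin.last n ∧
          (∀ i j : Fin (n+1), i < j → j ≤ m → a i < a j) ∧
          (∀ i j : Fin (n+1), m ≤ i → i < j → a j < a i) :=
  StdCox.main n w
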